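/- arXiv:2110.12239 — 2 statements merged into one kernel-verified Lean document; each statement's English description precedes it below -/
import Mathlib

section
/- Let P be a convex compact subset of R^n, ψ: P → R a σ-strongly convex differentiable function with Bregman divergence D(x‖y) = ψ(x) − ψ(y) − ⟨∇ψ(y), x − y⟩, J: P → R a convex differentiable function with ‖∇J(x)‖ ≤ G_J for all x ∈ P, and M = (1/2)·max_{x∈P} ‖∇ψ(x)‖. Let Φ: P → P be any map, let η̃_t ∈ P, and define η̃_{t+1} = Φ(argmin_{η∈P} [α⟨∇J(η̃_t), η⟩ + D(η‖η̃_t)]) for step size α > 0. Then for any comparator points η_t, η_{t+1} ∈ P, J(η̃_t) − J(η_t) ≤ (1/α)[D(η_t‖η̃_t) − D(η_{t+1}‖η̃_{t+1})] + (1/α)·Δ_Φ + (4M/α)·‖η_{t+1} − Φ(η_t)‖ + (α/(2σ))·G_J², where Δ_Φ = max_{x,y∈P} [D(Φ(x)‖Φ(y)) − D(x‖y)]. -/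
open scoped RealInnerProductSpace

/-- Bregman divergence of `ψ` with (formal) gradient `ψ'`. -/
noncomputable def bregman {n : ℕ} (ψ : EuclideanSpace ℝ (Fin n) → ℝ)
    (ψ' : EuclideanSpace ℝ (Fin n) → EuclideanSpace ℝ (Fin n))
    (x y : EuclideanSpace ℝ (Fin n)) : ℝ :=
  ψ x - ψ y - ⟪ψ' y, x - y⟫

/-- Per-step dynamic mirror descent lemma. -/
theorem dmd_per_step_lemma {n : ℕ}
    (P : Set (EuclideanSpace ℝ (Fin n))) (hPconv : Convex ℝ P) (hPcomp : IsCompact P)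
    (ψ J : EuclideanSpace ℝ (Fin n) → ℝ)
    (ψ' J' : EuclideanSpace ℝ (Fin n) → EuclideanSpace ℝ (Fin n))
    (σ G_J M ΔΦ α : ℝ) (hσ : 0 < σ) (hα : 0 < α)
    -- ψ is σ-strongly convex on P with gradient ψ'
    (hψgrad : ∀ x ∈ P, HasGradientAt ψ (ψ' x) x)
    (hψsc : ∀ x ∈ P, ∀ y ∈ P,
      ψ x ≥ ψ y + ⟪ψ' y, x - y⟫ + (σ / 2) * ‖x - y‖ ^ 2)
    -- J is convex and differentiable on P with bounded gradient
    (hJgrad : ∀ x ∈ P, HasGradientAt J (J' x) x)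
    (hJconv : ∀ x ∈ P, ∀ y ∈ P, J x - J y ≤ ⟪J' x, x - y⟫)
    (hGJ : ∀ x ∈ P, ‖J' x‖ ≤ G_J)
    -- M = (1/2) max over P of ‖∇ψ‖
    (hM : ∀ x ∈ P, ‖ψ' x‖ ≤ 2 * M)
    -- the shift operator Φ and its divergence-expansion bound Δ_Φ
    (Φ : EuclideanSpace ℝ (Fin n) → EuclideanSpace ℝ (Fin n))
    (hΦ : ∀ x ∈ P, Φ x ∈ P)
    (hΔΦ : ∀ x ∈ P, ∀ y ∈ P,
      bregman ψ ψ' (Φ x) (Φ y) - bregman ψ ψ' x y ≤ ΔΦ)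
    -- current iterate, the mirror-descent argmin ηhat, and the shifted next iterate
    (ηtil ηhat : EuclideanSpace ℝ (Fin n))
    (hηtil : ηtil ∈ P) (hηhatP : ηhat ∈ P)
    (hargmin : ∀ η ∈ P,
      α * ⟪J' ηtil, ηhat⟫ + bregman ψ ψ' ηhat ηtil ≤
      α * ⟪J' ηtil, η⟫ + bregman ψ ψ' η ηtil)
    -- comparator points
    (ηt ηt1 : EuclideanSpace ℝ (Fin n)) (hηt : ηt ∈ P) (hηt1 : ηt1 ∈ P) :
    J ηtil - J ηt ≤
      (1 / α) * (bregman ψ ψ' ηt ηtil - bregman ψ ψ' ηt1 (Φ ηhat))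
      + ΔΦ / α + (4 * M / α) * ‖ηt1 - Φ ηt‖ + (α / (2 * σ)) * G_J ^ 2 := by
  have hg0 : 0 ≤ G_J := le_trans (norm_nonneg _) (hGJ ηtil hηtil)
  set g := J' ηtil with hg
  -- the objective of the mirror-descent step and its derivative at ηhat
  have h1 : HasFDerivAt (fun η : EuclideanSpace ℝ (Fin n) => α * ⟪g, η⟫)
      (α • innerSL ℝ g) ηhat :=
    (innerSL ℝ g).hasFDerivAt.const_mul α
  have h2 : HasFDerivAt ψ
      (InnerProductSpace.toDual ℝ (EuclideanSpace ℝ (Fin n)) (ψ' ηhat)) ηhat :=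
    hasGradientAt_iff_hasFDerivAt.mp (hψgrad ηhat hηhatP)
  have h3 : HasFDerivAt (fun η : EuclideanSpace ℝ (Fin n) => ⟪ψ' ηtil, η - ηtil⟫)
      (innerSL ℝ (ψ' ηtil)) ηhat := by
    have := ((innerSL ℝ (ψ' ηtil)).hasFDerivAt (x := ηhat)).sub_const ⟪ψ' ηtil, ηtil⟫
    simp only [innerSL_apply_apply] at this ⊢
    simpa only [inner_sub_right] using this
  have hFD : HasFDerivAt
      (fun η : EuclideanSpace ℝ (Fin n) =>
        α * ⟪g, η⟫ + (ψ η - ψ ηtil - ⟪ψ' ηtil, η - ηtil⟫))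
      ((α • innerSL ℝ g) +
        ((InnerProductSpace.toDual ℝ (EuclideanSpace ℝ (Fin n)) (ψ' ηhat))
          - innerSL ℝ (ψ' ηtil))) ηhat :=
    h1.add ((h2.sub_const (ψ ηtil)).sub h3)
  have hmin : IsMinOn
      (fun η : EuclideanSpace ℝ (Fin n) =>
        α * ⟪g, η⟫ + (ψ η - ψ ηtil - ⟪ψ' ηtil, η - ηtil⟫)) P ηhat := by
    intro η hη
    have := hargmin η hη
    simp only [bregman] at this
    exact this
  have hcone : ηt - ηhat ∈ posTangentConeAt P ηhat :=
    sub_mem_posTangentConeAt_of_segment_subset (hPconv.segment_subset hηhatP hηt)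
  have key0 := hmin.localize.hasFDerivWithinAt_nonneg hFD.hasFDerivWithinAt hcone
  have key : 0 ≤ α * ⟪g, ηt - ηhat⟫ + (⟪ψ' ηhat, ηt - ηhat⟫ - ⟪ψ' ηtil, ηt - ηhat⟫) := by
    simpa only [ContinuousLinearMap.add_apply, ContinuousLinearMap.coe_sub',
      Pi.sub_apply, ContinuousLinearMap.coe_smul', Pi.smul_apply, innerSL_apply_apply,
      InnerProductSpace.toDual_apply_apply, smul_eq_mul] using key0
  -- three-point identity
  have three : ⟪ψ' ηhat, ηt - ηhat⟫ - ⟪ψ' ηtil, ηt - ηhat⟫ =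
      bregman ψ ψ' ηt ηtil - bregman ψ ψ' ηt ηhat - bregman ψ ψ' ηhat ηtil := by
    simp only [bregman, inner_sub_right]
    ring
  set r := ‖ηhat - ηtil‖ with hr
  have hr0 : 0 ≤ r := norm_nonneg _
  -- strong convexity lower bound on D(ηhat ‖ ηtil)
  have hsc := hψsc ηhat hηhatP ηtil hηtil
  have hC : (σ / 2) * r ^ 2 ≤ bregman ψ ψ' ηhat ηtil := by
    simp only [bregman]; linarith
  -- convexity of J
  have hJ : J ηtil - J ηt ≤ ⟪g, ηtil - ηt⟫ := hJconv ηtil hηtil ηt hηt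
  -- Cauchy-Schwarz on g
  have hCS : ⟪g, ηtil - ηhat⟫ ≤ G_J * r := by
    calc ⟪g, ηtil - ηhat⟫ ≤ ‖g‖ * ‖ηtil - ηhat‖ := real_inner_le_norm _ _
      _ ≤ G_J * ‖ηtil - ηhat‖ :=
        mul_le_mul_of_nonneg_right (hGJ ηtil hηtil) (norm_nonneg _)
      _ = G_J * r := by rw [hr, norm_sub_rev]
  -- shifting comparators
  have hΦηt : Φ ηt ∈ P := hΦ ηt hηt
  have hΦηhat : Φ ηhat ∈ P := hΦ ηhat hηhatP
  have hM1 := hM ηt1 hηt1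
  have hM2 := hM (Φ ηhat) hΦηhat
  have hpsconv := hψsc (Φ ηt) hΦηt ηt1 hηt1
  have hsq : (0:ℝ) ≤ (σ / 2) * ‖Φ ηt - ηt1‖ ^ 2 := by positivity
  have hip1 : ⟪ψ' ηt1, ηt1 - Φ ηt⟫ ≤ 2 * M * ‖ηt1 - Φ ηt‖ := by
    calc ⟪ψ' ηt1, ηt1 - Φ ηt⟫ ≤ ‖ψ' ηt1‖ * ‖ηt1 - Φ ηt‖ := real_inner_le_norm _ _
      _ ≤ 2 * M * ‖ηt1 - Φ ηt‖ := mul_le_mul_of_nonneg_right hM1 (norm_nonneg _)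
  have hip2 : -⟪ψ' (Φ ηhat), ηt1 - Φ ηt⟫ ≤ 2 * M * ‖ηt1 - Φ ηt‖ := by
    calc -⟪ψ' (Φ ηhat), ηt1 - Φ ηt⟫ = ⟪ψ' (Φ ηhat), Φ ηt - ηt1⟫ := by
          rw [← inner_neg_right]; congr 1; abel
      _ ≤ ‖ψ' (Φ ηhat)‖ * ‖Φ ηt - ηt1‖ := real_inner_le_norm _ _
      _ = ‖ψ' (Φ ηhat)‖ * ‖ηt1 - Φ ηt‖ := by rw [norm_sub_rev]
      _ ≤ 2 * M * ‖ηt1 - Φ ηt‖ := mul_le_mul_of_nonneg_right hM2 (norm_nonneg _)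
  have hswap : bregman ψ ψ' ηt1 (Φ ηhat) - bregman ψ ψ' (Φ ηt) (Φ ηhat) ≤
      4 * M * ‖ηt1 - Φ ηt‖ := by
    have hflip : ⟪ψ' ηt1, Φ ηt - ηt1⟫ = -⟪ψ' ηt1, ηt1 - Φ ηt⟫ := by
      rw [← inner_neg_right]; congr 1; abel
    have hdiff : ψ ηt1 - ψ (Φ ηt) ≤ ⟪ψ' ηt1, ηt1 - Φ ηt⟫ := by
      rw [hflip] at hpsconv; linarith
    have heq : bregman ψ ψ' ηt1 (Φ ηhat) - bregman ψ ψ' (Φ ηt) (Φ ηhat) =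
        ψ ηt1 - ψ (Φ ηt) - ⟪ψ' (Φ ηhat), ηt1 - Φ ηt⟫ := by
      simp only [bregman, inner_sub_right]; ring
    rw [heq]
    linarith
  have hshift := hΔΦ ηt hηt ηhat hηhatP
  -- quadratic bound
  have hquad : α * (G_J * r) - (σ / 2) * r ^ 2 ≤ α ^ 2 / (2 * σ) * G_J ^ 2 := by
    have h2σ : (0:ℝ) < 2 * σ := by linarith
    refine (mul_le_mul_iff_of_pos_right h2σ).mp ?_
    have hcancel : α ^ 2 / (2 * σ) * G_J ^ 2 * (2 * σ) = α ^ 2 * G_J ^ 2 := by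
      field_simp
    rw [hcancel]
    nlinarith [sq_nonneg (α * G_J - σ * r)]
  -- assemble the α-scaled inequality
  have h1' : α * (J ηtil - J ηt) ≤ α * ⟪g, ηtil - ηt⟫ :=
    mul_le_mul_of_nonneg_left hJ hα.le
  have hsplit : α * ⟪g, ηtil - ηt⟫ =
      α * ⟪g, ηtil - ηhat⟫ + α * ⟪g, ηhat - ηt⟫ := by
    rw [← mul_add, ← inner_add_right]; congr 2; abel
  have hneg : α * ⟪g, ηhat - ηt⟫ = -(α * ⟪g, ηt - ηhat⟫) := by
    have h : ⟪g, ηhat - ηt⟫ = -⟪g, ηt - ηhat⟫ := by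
      rw [← inner_neg_right]; congr 1; abel
    rw [h]; ring
  have hgd : α * ⟪g, ηtil - ηhat⟫ ≤ α * (G_J * r) :=
    mul_le_mul_of_nonneg_left hCS hα.le
  have hfin : α * (J ηtil - J ηt) ≤
      (bregman ψ ψ' ηt ηtil - bregman ψ ψ' ηt1 (Φ ηhat)) + ΔΦ
        + 4 * M * ‖ηt1 - Φ ηt‖ + α ^ 2 / (2 * σ) * G_J ^ 2 := by
    linarith [h1', hsplit, hneg, key, three, hgd, hC, hquad, hswap, hshift]
  -- divide by α
  have hRHS : (1 / α) * (bregman ψ ψ' ηt ηtil - bregman ψ ψ' ηt1 (Φ ηhat))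
      + ΔΦ / α + (4 * M / α) * ‖ηt1 - Φ ηt‖ + (α / (2 * σ)) * G_J ^ 2
      = (1 / α) * ((bregman ψ ψ' ηt ηtil - bregman ψ ψ' ηt1 (Φ ηhat)) + ΔΦ
        + 4 * M * ‖ηt1 - Φ ηt‖ + α ^ 2 / (2 * σ) * G_J ^ 2) := by
    field_simp
  rw [hRHS]
  have hid : J ηtil - J ηt = (1 / α) * (α * (J ηtil - J ηt)) := by
    field_simp
  rw [hid]
  exact mul_le_mul_of_nonneg_left hfin (by positivity)
end

section
/- Let J be convex and differentiable on convex P with ‖∇J‖ ≤ G_J, let ψ be σ-strongly convex with Bregman divergence D, let α > 0, and let η̂ = argmin_{η∈P}[α⟨∇J(η̃), η⟩ + D(η‖η̃)]. Then for every η ∈ P: J(η̃) − J(η) ≤ (1/α)[D(η‖η̃) − D(η‖η̂)] + (α/(2σ))·G_J². -/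
open scoped RealInnerProductSpace

/-- One-step mirror descent progress bound for a convex loss with bounded gradient. -/
theorem mirror_descent_one_step_bound {n : ℕ}
    (P : Set (EuclideanSpace ℝ (Fin n))) (hPconv : Convex ℝ P) (hPcomp : IsCompact P)
    (ψ J : EuclideanSpace ℝ (Fin n) → ℝ)
    (ψ' J' : EuclideanSpace ℝ (Fin n) → EuclideanSpace ℝ (Fin n))
    (σ G_J α : ℝ) (hσ : 0 < σ) (hα : 0 < α)
    (hψgrad : ∀ x ∈ P, HasGradientAt ψ (ψ' x) x)
    (hψsc : ∀ x ∈ P, ∀ y ∈ P,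
      ψ x ≥ ψ y + ⟪ψ' y, x - y⟫ + (σ / 2) * ‖x - y‖ ^ 2)
    (hJgrad : ∀ x ∈ P, HasGradientAt J (J' x) x)
    (hJconv : ∀ x ∈ P, ∀ y ∈ P, J x - J y ≤ ⟪J' x, x - y⟫)
    (hGJ : ∀ x ∈ P, ‖J' x‖ ≤ G_J)
    (D : EuclideanSpace ℝ (Fin n) → EuclideanSpace ℝ (Fin n) → ℝ)
    (hD : ∀ x y, D x y = ψ x - ψ y - ⟪ψ' y, x - y⟫)
    (ηtil ηhat : EuclideanSpace ℝ (Fin n)) (hηtil : ηtil ∈ P) (hηhat : ηhat ∈ P)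
    (hargmin : ∀ η ∈ P,
      α * ⟪J' ηtil, ηhat⟫ + D ηhat ηtil ≤ α * ⟪J' ηtil, η⟫ + D η ηtil) :
    ∀ η ∈ P, J ηtil - J η ≤
      (1 / α) * (D η ηtil - D η ηhat) + (α / (2 * σ)) * G_J ^ 2 := by
  intro η hη
  set g := J' ηtil with hg
  -- Variational inequality from the argmin property
  have hVI : 0 ≤ α * ⟪g, η - ηhat⟫ + ⟪ψ' ηhat - ψ' ηtil, η - ηhat⟫ := by
    set L : EuclideanSpace ℝ (Fin n) →L[ℝ] ℝ :=
      α • (innerSL ℝ g) + ((InnerProductSpace.toDual ℝ _) (ψ' ηhat) - innerSL ℝ (ψ' ηtil))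
      with hL
    have hF : HasFDerivAt (fun x => α * ⟪g, x⟫ + D x ηtil) L ηhat := by
      have h1 : HasFDerivAt (fun x : EuclideanSpace ℝ (Fin n) => α * ⟪g, x⟫)
          (α • innerSL ℝ g) ηhat := ((innerSL ℝ g).hasFDerivAt).const_mul α
      have h2 : HasFDerivAt ψ ((InnerProductSpace.toDual ℝ _) (ψ' ηhat)) ηhat :=
        (hψgrad ηhat hηhat).hasFDerivAt
      have h3 : HasFDerivAt (fun x : EuclideanSpace ℝ (Fin n) => ψ x - ψ ηtil - ⟪ψ' ηtil, x - ηtil⟫)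
          ((InnerProductSpace.toDual ℝ _) (ψ' ηhat) - innerSL ℝ (ψ' ηtil)) ηhat := by
        have h4 : HasFDerivAt (fun x : EuclideanSpace ℝ (Fin n) => ⟪ψ' ηtil, x - ηtil⟫)
            (innerSL ℝ (ψ' ηtil)) ηhat := by
          have := ((innerSL ℝ (ψ' ηtil)).hasFDerivAt (x := ηhat)).sub_const ⟪ψ' ηtil, ηtil⟫
          exact this.congr_of_eventuallyEq (Filter.Eventually.of_forall fun x => by simp [inner_sub_right])
        exact (h2.sub_const (ψ ηtil)).sub h4
      have := h1.add h3
      exact this.congr_of_eventuallyEq (Filter.Eventually.of_forall fun x => by simp only [Pi.add_apply, hD])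
    have hmin : IsLocalMinOn (fun x => α * ⟪g, x⟫ + D x ηtil) P ηhat :=
      (isMinOn_iff.mpr fun x hx => hargmin x hx).localize
    have htang : η - ηhat ∈ posTangentConeAt P ηhat :=
      sub_mem_posTangentConeAt_of_segment_subset (hPconv.segment_subset hηhat hη)
    have := hmin.hasFDerivWithinAt_nonneg hF.hasFDerivWithinAt htang
    simpa [hL, inner_sub_left, real_inner_smul_left, mul_comm] using this
  -- three-point identity
  have hid : ⟪ψ' ηhat - ψ' ηtil, η - ηhat⟫ = D η ηtil - D η ηhat - D ηhat ηtil := by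
    simp only [hD, inner_sub_left, inner_sub_right]
    ring
  have key : α * ⟪g, ηhat - η⟫ ≤ D η ηtil - D η ηhat - D ηhat ηtil := by
    rw [hid] at hVI
    have : ⟪g, ηhat - η⟫ = - ⟪g, η - ηhat⟫ := by
      rw [← inner_neg_right]; congr 1; abel
    rw [this]; nlinarith
  -- strong convexity lower bound on D ηhat ηtil
  have hsc : D ηhat ηtil ≥ (σ / 2) * ‖ηtil - ηhat‖ ^ 2 := by
    have := hψsc ηhat hηhat ηtil hηtil
    rw [hD]
    rw [norm_sub_rev]
    linarith
  -- convexity of J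
  have hconv := hJconv ηtil hηtil η hη
  have hsplit : ⟪g, ηtil - η⟫ = ⟪g, ηtil - ηhat⟫ + ⟪g, ηhat - η⟫ := by
    rw [← inner_add_right]; congr 1; abel
  -- Cauchy-Schwarz + gradient bound
  have hcs : ⟪g, ηtil - ηhat⟫ ≤ G_J * ‖ηtil - ηhat‖ := by
    calc ⟪g, ηtil - ηhat⟫ ≤ ‖g‖ * ‖ηtil - ηhat‖ := real_inner_le_norm _ _
      _ ≤ G_J * ‖ηtil - ηhat‖ := by
          exact mul_le_mul_of_nonneg_right (hGJ ηtil hηtil) (norm_nonneg _)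
  have hnn : (0:ℝ) ≤ ‖ηtil - ηhat‖ := norm_nonneg _
  -- combine
  have hyoung : G_J * ‖ηtil - ηhat‖ - (1/α) * ((σ/2) * ‖ηtil - ηhat‖^2)
      ≤ (α / (2 * σ)) * G_J ^ 2 := by
    have h2 : G_J * ‖ηtil - ηhat‖ ≤
        (1/α) * ((σ/2) * ‖ηtil - ηhat‖^2) + (α / (2 * σ)) * G_J ^ 2 := by
      rw [← sub_nonneg]
      have hkey : (1/α) * ((σ/2) * ‖ηtil - ηhat‖^2) + (α / (2 * σ)) * G_J ^ 2
          - G_J * ‖ηtil - ηhat‖ = (α * G_J - σ * ‖ηtil - ηhat‖)^2 / (2*α*σ) := by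
        field_simp
        ring
      rw [hkey]
      positivity
    linarith
  have h1α : (0:ℝ) < 1/α := by positivity
  calc J ηtil - J η ≤ ⟪g, ηtil - η⟫ := hconv
    _ = ⟪g, ηtil - ηhat⟫ + ⟪g, ηhat - η⟫ := hsplit
    _ ≤ G_J * ‖ηtil - ηhat‖ + (1/α) * (D η ηtil - D η ηhat - D ηhat ηtil) := by
        have : ⟪g, ηhat - η⟫ ≤ (1/α) * (D η ηtil - D η ηhat - D ηhat ηtil) := by
          calc ⟪g, ηhat - η⟫ ≤ (D η ηtil - D η ηhat - D ηhat ηtil) / α :=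
                (le_div_iff₀' hα).mpr key
            _ = (1/α) * _ := by ring
        linarith
    _ ≤ (1 / α) * (D η ηtil - D η ηhat) + (α / (2 * σ)) * G_J ^ 2 := by
        have hd : (1/α) * ((σ/2) * ‖ηtil - ηhat‖^2) ≤ (1/α) * D ηhat ηtil :=
          mul_le_mul_of_nonneg_left hsc (le_of_lt h1α)
        nlinarith
end
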